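/- Suppose B ⊆ {1, …, y} is a set such that for every prime p ≤ z there is a residue class mod p containing no element of B (with z ≤ y). Then there exists a subset A ⊆ B that is admissible (i.e., for every prime p there is a residue class mod p avoided by A) with |A| ≥ ∏_{z < p ≤ y} (1 − 1/p) · |B|. -/

import Mathlib

open scoped Classical

lemma aux_sieve (S : Finset ℕ) (hS : ∀ p ∈ S, p.Prime) (B : Finset ℕ) :
    ∃ A : Finset ℕ, A ⊆ B ∧
      (∀ p ∈ S, ∃ a : ℤ, ∀ b ∈ A, ¬ (b : ℤ) ≡ a [ZMOD p]) ∧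
      (∏ p ∈ S, (1 - 1 / (p : ℝ))) * B.card ≤ A.card := by
  induction S using Finset.induction_on generalizing B with
  | empty => exact ⟨B, Finset.Subset.refl _, by simp, by simp⟩
  | @insert p S hpS ih =>
    have hp : p.Prime := hS p (Finset.mem_insert_self _ _)
    haveI : NeZero p := ⟨hp.ne_zero⟩
    obtain ⟨a, -, ha⟩ := Finset.exists_min_image (Finset.univ : Finset (ZMod p))
      (fun a => (B.filter fun b => ((b : ℕ) : ZMod p) = a).card) ⟨0, Finset.mem_univ 0⟩
    set m := (B.filter fun b => ((b : ℕ) : ZMod p) = a).card with hm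
    have hsum : B.card = ∑ c : ZMod p, (B.filter fun b => ((b : ℕ) : ZMod p) = c).card :=
      Finset.card_eq_sum_card_fiberwise (fun b _ => Finset.mem_univ _)
    have hpm : p * m ≤ B.card := by
      rw [hsum]
      calc p * m = ∑ _c : ZMod p, m := by simp [ZMod.card, mul_comm]
        _ ≤ _ := Finset.sum_le_sum fun c _ => ha c (Finset.mem_univ c)
    set B' := B.filter fun b => ¬ (((b : ℕ) : ZMod p) = a) with hB'
    have hmB : m ≤ B.card := by
      rw [hm]; exact Finset.card_filter_le _ _
    have hcard : B'.card = B.card - m := by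
      have hsplit : m + B'.card = B.card := by
        rw [hm, hB']
        exact Finset.card_filter_add_card_filter_not _
      omega
    obtain ⟨A, hAB', hAavoid, hAcard⟩ := ih (fun q hq => hS q (Finset.mem_insert_of_mem hq)) B'
    refine ⟨A, hAB'.trans (Finset.filter_subset _ _), ?_, ?_⟩
    · intro q hq
      rcases Finset.mem_insert.mp hq with rfl | hq
      · refine ⟨(a.val : ℤ), fun b hb hmod => ?_⟩
        have hb' := hAB' hb
        rw [hB', Finset.mem_filter] at hb'
        apply hb'.2
        have h1 : ((b : ℤ) : ZMod q) = ((a.val : ℤ) : ZMod q) :=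
          (ZMod.intCast_eq_intCast_iff _ _ _).mpr hmod
        simpa using h1
      · exact hAavoid q hq
    · rw [Finset.prod_insert hpS]
      have hple : (1:ℝ) ≤ p := by exact_mod_cast hp.one_lt.le
      have hp0 : (0:ℝ) < p := by linarith
      have h1 : (0:ℝ) ≤ 1 - 1/(p:ℝ) := by
        rw [sub_nonneg, div_le_one hp0]; exact hple
      have hprod : (0:ℝ) ≤ ∏ q ∈ S, (1 - 1/(q:ℝ)) := by
        apply Finset.prod_nonneg
        intro q hq
        have hq' := hS q (Finset.mem_insert_of_mem hq)
        have : (1:ℝ) ≤ q := by exact_mod_cast hq'.one_lt.le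
        have hq0 : (0:ℝ) < q := by linarith
        rw [sub_nonneg, div_le_one hq0]; exact this
      have hmr : (m:ℝ) * p ≤ (B.card:ℝ) := by
        have : m * p ≤ B.card := by rw [mul_comm]; exact hpm
        exact_mod_cast this
      have hB'card : (1 - 1/(p:ℝ)) * B.card ≤ B'.card := by
        rw [hcard, Nat.cast_sub hmB]
        have hm' : (m:ℝ) ≤ (B.card:ℝ)/p := by
          rw [le_div_iff₀ hp0]; exact hmr
        have hBc : (0:ℝ) ≤ (B.card:ℝ) := Nat.cast_nonneg _
        have : (1 - 1/(p:ℝ)) * B.card = B.card - B.card / p := by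
          field_simp
        rw [this]
        have : (B.card:ℝ)/p ≤ (B.card:ℝ) := by
          rw [div_le_iff₀ hp0]; nlinarith
        linarith
      calc (1 - 1/(p:ℝ)) * (∏ q ∈ S, (1-1/(q:ℝ))) * B.card
          = (∏ q ∈ S, (1-1/(q:ℝ))) * ((1-1/(p:ℝ)) * B.card) := by ring
        _ ≤ (∏ q ∈ S, (1-1/(q:ℝ))) * B'.card :=
            mul_le_mul_of_nonneg_left hB'card hprod
        _ ≤ A.card := hAcard

/-- If `B ⊆ {1, …, y}` avoids a residue class mod `p` for every prime `p ≤ z`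
(with `z ≤ y`), then there is an admissible subset `A ⊆ B` with
`|A| ≥ ∏_{z < p ≤ y} (1 - 1/p) · |B|`. -/
theorem stmt_12 (y z : ℕ) (hzy : z ≤ y) (B : Finset ℕ)
    (hB : B ⊆ Finset.Icc 1 y)
    (hsieved : ∀ p : ℕ, p.Prime → p ≤ z →
      ∃ a : ℤ, ∀ b ∈ B, ¬ (b : ℤ) ≡ a [ZMOD p]) :
    ∃ A : Finset ℕ, A ⊆ B ∧
      (∀ p : ℕ, p.Prime → ∃ a : ℤ, ∀ b ∈ A, ¬ (b : ℤ) ≡ a [ZMOD p]) ∧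
      (∏ p ∈ (Finset.Ioc z y).filter Nat.Prime, (1 - 1 / (p : ℝ))) * B.card ≤
        A.card := by
  obtain ⟨A, hAB, hAavoid, hAcard⟩ := aux_sieve ((Finset.Ioc z y).filter Nat.Prime)
    (fun p hp => (Finset.mem_filter.mp hp).2) B
  refine ⟨A, hAB, ?_, hAcard⟩
  intro p hp
  by_cases hpz : p ≤ z
  · obtain ⟨a, haB⟩ := hsieved p hp hpz
    exact ⟨a, fun b hb => haB b (hAB hb)⟩
  · by_cases hpy : p ≤ y
    · exact hAavoid p (Finset.mem_filter.mpr ⟨Finset.mem_Ioc.mpr ⟨lt_of_not_ge hpz, hpy⟩, hp⟩)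
    · refine ⟨0, fun b hb hmod => ?_⟩
      have hbB := hB (hAB hb)
      rw [Finset.mem_Icc] at hbB
      have hdvd : (p:ℤ) ∣ (b:ℤ) := Int.modEq_zero_iff_dvd.mp hmod
      have hdvd' : p ∣ b := by exact_mod_cast hdvd
      have : p ≤ b := Nat.le_of_dvd (by omega) hdvd'
      omega
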